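/- arXiv:1911.12823 — 6 statements merged into one kernel-verified Lean document; each statement's English description precedes it below -/
import Mathlib

section
/- For every natural number i with i ≥ 2, every natural number d with 2^i ≤ d ≤ 2^(i+1) − 3, and every e ∈ {2^i − 2, 2^i − 1}, the binomial coefficient C(d, e) is even (i.e., C(d, e) ≡ 0 (mod 2)). -/
/-- Gap Lemma: for `i ≥ 2` and `2^i ≤ d ≤ 2^(i+1) - 3`, the binomial coefficient
`C(d, e)` is even for `e ∈ {2^i - 2, 2^i - 1}`. -/
theorem gap_lemma (i d e : ℕ) (hi : 2 ≤ i) (hd1 : 2 ^ i ≤ d) (hd2 : d ≤ 2 ^ (i + 1) - 3)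
    (he : e = 2 ^ i - 2 ∨ e = 2 ^ i - 1) :
    Nat.choose d e % 2 = 0 := by
  have h4 : 4 ≤ 2 ^ i := by
    calc (4 : ℕ) = 2 ^ 2 := rfl
    _ ≤ 2 ^ i := Nat.pow_le_pow_right (by norm_num) hi
  have hpow : 2 ^ (i + 1) = 2 ^ i + 2 ^ i := by ring
  obtain ⟨r, rfl⟩ := Nat.exists_eq_add_of_le hd1
  have hr : r ≤ 2 ^ i - 3 := by omega
  have hre : r < e := by omega
  have he1 : e < 2 ^ i := by omega
  rw [← Nat.dvd_iff_mod_eq_zero, Nat.add_choose_eq]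
  apply Finset.dvd_sum
  rintro ⟨a, b⟩ hab
  rw [Finset.HasAntidiagonal.mem_antidiagonal] at hab
  rcases Nat.eq_zero_or_pos a with ha | ha
  · have : b = e := by omega
    subst this
    rw [Nat.choose_eq_zero_of_lt hre]
    simp
  · have ha2 : a ≠ 2 ^ i := by omega
    exact Dvd.dvd.mul_right (Nat.Prime.dvd_choose_pow Nat.prime_two (by omega) ha2) _
end

section
/- Let F be a finite field of characteristic 2 with |F| = 2^m for some m > 2. Let i ≥ 2 and let d be an even natural number with 2^i ≤ d ≤ 2^(i+1) − 3, and let P ∈ F[X] be a permutation polynomial with natural degree d. Then there exists b ∈ F such that, in the polynomial P(X + b) (i.e., P.comp(X + C b)), either the coefficient of X^(2^i − 1) is zero or the coefficient of X^(2^i − 2) is zero. -/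
open Polynomial

lemma even_choose_aux (i k j : ℕ) (hk : k < 2 ^ i) (h1 : 2 ^ i ≤ j) (h2 : j - 2 ^ i < k) :
    2 ∣ j.choose k := by
  obtain ⟨r, rfl⟩ : ∃ r, j = 2 ^ i + r := ⟨j - 2 ^ i, by omega⟩
  rw [Nat.add_choose_eq]
  refine Finset.dvd_sum ?_
  rintro ⟨t1, t2⟩ hmem
  rw [Finset.HasAntidiagonal.mem_antidiagonal] at hmem
  by_cases ht : t1 = 0
  · subst ht
    simp only [Nat.zero_add] at hmem
    subst hmem
    simp [Nat.choose_eq_zero_of_lt (by omega : r < t2)]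
  · exact Dvd.dvd.mul_right (Nat.Prime.dvd_choose_pow Nat.prime_two ht (by omega)) _

/-- Over a finite field of characteristic 2 with `2^m` elements (`m > 2`), any permutation
polynomial of even degree `d` with `2^i ≤ d ≤ 2^(i+1) - 3` (`i ≥ 2`) admits a shift `x ↦ x + b`
after which the coefficient of `X^(2^i - 1)` or of `X^(2^i - 2)` is zero. -/
theorem b_normalization_shift (F : Type*) [Field F] [Fintype F] (m : ℕ) (hm : 2 < m)
    [CharP F 2] (hcard : Fintype.card F = 2 ^ m)
    (i : ℕ) (hi : 2 ≤ i) (d : ℕ) (hdeven : Even d) (hd1 : 2 ^ i ≤ d) (hd2 : d ≤ 2 ^ (i + 1) - 3)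
    (P : Polynomial F) (hdeg : P.natDegree = d)
    (hPP : Function.Bijective fun x => P.eval x) :
    ∃ b : F, (P.comp (X + C b)).coeff (2 ^ i - 1) = 0 ∨
      (P.comp (X + C b)).coeff (2 ^ i - 2) = 0 := by
  have h4 : 4 ≤ 2 ^ i := by calc (4:ℕ) = 2 ^ 2 := rfl
                                 _ ≤ 2 ^ i := Nat.pow_le_pow_right (by norm_num) hi
  have hpow : 2 ^ (i + 1) = 2 * 2 ^ i := by rw [pow_succ]; ring
  by_cases ha : P.coeff (2 ^ i - 1) = 0
  · exact ⟨0, Or.inl (by simpa using ha)⟩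
  set a : F := P.coeff (2 ^ i - 1) with haa
  set c : F := P.coeff (2 ^ i - 2) with hcc
  refine ⟨c / a, Or.inr ?_⟩
  set b : F := c / a with hb
  set k : ℕ := 2 ^ i - 2 with hk
  rw [← taylor_apply, taylor_coeff]
  have hdle : (hasseDeriv k P).natDegree < d + 1 := by
    have := natDegree_hasseDeriv_le P k
    omega
  rw [eval_eq_sum_range' hdle b]
  have hsub : Finset.range 2 ⊆ Finset.range (d + 1) := Finset.range_subset_range.mpr (by omega)
  have hzero : ∀ n ∈ Finset.range (d + 1), n ∉ Finset.range 2 →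
      (hasseDeriv k P).coeff n * b ^ n = 0 := by
    intro n _ hn
    rw [Finset.mem_range] at hn
    push_neg at hn
    rw [hasseDeriv_coeff]
    by_cases hnd : n + k ≤ d
    · have h2 : 2 ∣ (n + k).choose k := even_choose_aux i k (n + k) (by omega) (by omega) (by omega)
      rw [(CharP.cast_eq_zero_iff F 2 _).mpr h2]
      ring
    · rw [coeff_eq_zero_of_natDegree_lt (by omega : P.natDegree < n + k)]
      ring
  rw [← Finset.sum_subset hsub hzero, Finset.sum_range_succ, Finset.sum_range_one,
    hasseDeriv_coeff, hasseDeriv_coeff]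
  have e0 : 0 + k = 2 ^ i - 2 := by omega
  have e1 : 1 + k = 2 ^ i - 1 := by omega
  rw [e0, e1, Nat.choose_self]
  have hch : (2 ^ i - 1).choose k = 2 ^ i - 1 := by
    have : 2 ^ i - 1 = k + 1 := by omega
    rw [this, Nat.choose_succ_self_right]
  have h2F : (2 : F) = 0 := by exact_mod_cast CharP.cast_eq_zero F 2
  have hcast : ((2 ^ i - 1 : ℕ) : F) = 1 := by
    rw [Nat.cast_sub (by omega : 1 ≤ 2 ^ i)]
    push_cast
    rw [h2F]
    rw [zero_pow (by omega : i ≠ 0)]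
    linear_combination -h2F
  rw [hch, hcast]
  rw [← hcc, ← haa]
  have hinv : a * a⁻¹ = 1 := mul_inv_cancel₀ ha
  rw [hb, div_eq_mul_inv]
  linear_combination c * hinv + c * h2F - c * a⁻¹ * a * h2F + c * a * a⁻¹ * h2F
end

section
/- Let F be a finite field of odd characteristic p, and let P ∈ F[X] be a permutation polynomial whose natural degree d satisfies d ≥ 2 and p ∣ d. Then there exist a, b, c ∈ F with a ≠ 0 such that the polynomial Q = a·P(X + b) + c (i.e., C a * P.comp(X + C b) + C c) is a permutation polynomial which is monic of degree d, satisfies Q(0) = 0, and has either its coefficient of X^(d−1) equal to zero or its coefficient of X^(d−2) equal to zero. -/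
open Polynomial

/-- m-normalization: over a finite field of odd characteristic `p`, any permutation polynomial
of degree `d ≥ 2` with `p ∣ d` can be transformed by `P ↦ a·P(X + b) + c` (`a ≠ 0`) into a
permutation polynomial `Q` that is monic of degree `d`, satisfies `Q(0) = 0`, and whose
coefficient of `X^(d-1)` or of `X^(d-2)` is zero. -/
theorem m_normalization (F : Type*) [Field F] [Fintype F] (p : ℕ) [Fact p.Prime] [CharP F p]
    (hodd : Odd p) (P : Polynomial F) (d : ℕ) (hdeg : P.natDegree = d) (hd2 : 2 ≤ d)
    (hdvd : p ∣ d) (hPP : Function.Bijective fun x => P.eval x) :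
    ∃ a b c : F, a ≠ 0 ∧
      (Function.Bijective fun x =>
          (C a * P.comp (X + C b) + C c).eval x) ∧
      (C a * P.comp (X + C b) + C c).Monic ∧
      (C a * P.comp (X + C b) + C c).natDegree = d ∧
      (C a * P.comp (X + C b) + C c).eval 0 = 0 ∧
      ((C a * P.comp (X + C b) + C c).coeff (d - 1) = 0 ∨
        (C a * P.comp (X + C b) + C c).coeff (d - 2) = 0) := by
  have pp : p.Prime := Fact.out
  have hp3 : 3 ≤ p := by
    rcases hodd with ⟨k, hk⟩
    have := pp.two_le; omega
  have hd3 : 3 ≤ d := le_trans hp3 (Nat.le_of_dvd (by omega) hdvd)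
  have hP0 : P ≠ 0 := by
    intro h
    rw [h, natDegree_zero] at hdeg; omega
  have hlead : P.leadingCoeff ≠ 0 := leadingCoeff_ne_zero.mpr hP0
  set a : F := P.leadingCoeff⁻¹ with ha_def
  have ha : a ≠ 0 := inv_ne_zero hlead
  -- cast facts
  have hdF : ((d : ℕ) : F) = 0 := (CharP.cast_eq_zero_iff F p d).mpr hdvd
  have hdm1F : (((d - 1 : ℕ)) : F) = -1 := by
    rw [Nat.cast_sub (by omega : 1 ≤ d), hdF]; ring
  have hchoose2 : ((d.choose 2 : ℕ) : F) = 0 := by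
    have h2 : (2 : ℕ) ∣ d * (d - 1) := by
      rcases Nat.even_or_odd d with h | h
      · exact Dvd.dvd.mul_right h.two_dvd _
      · exact Dvd.dvd.mul_left (Nat.Odd.sub_odd h odd_one).two_dvd _
    have hmul : d.choose 2 * 2 = d * (d - 1) := by
      rw [Nat.choose_two_right, Nat.div_mul_cancel h2]
    have hpd : p ∣ d.choose 2 * 2 := hmul ▸ hdvd.mul_right _
    rcases (pp.dvd_mul.mp hpd) with h | h
    · exact (CharP.cast_eq_zero_iff F p _).mpr h
    · exfalso
      have := Nat.le_of_dvd two_pos h; omega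
  -- main construction, parametric in b
  have key : ∀ b : F, ∃ c : F,
      (Function.Bijective fun x => (C a * P.comp (X + C b) + C c).eval x) ∧
      (C a * P.comp (X + C b) + C c).Monic ∧
      (C a * P.comp (X + C b) + C c).natDegree = d ∧
      (C a * P.comp (X + C b) + C c).eval 0 = 0 ∧
      (∀ k, 1 ≤ k → (C a * P.comp (X + C b) + C c).coeff k
        = a * ((taylor b) P).coeff k) := by
    intro b
    have hcomp_deg : (P.comp (X + C b)).natDegree = d := by
      rw [natDegree_comp, natDegree_X_add_C, mul_one, hdeg]
    have hcomp_lead : (P.comp (X + C b)).coeff d = P.leadingCoeff := by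
      have h1 : (P.comp (X + C b)).leadingCoeff = P.leadingCoeff := by
        rw [leadingCoeff_comp (by rw [natDegree_X_add_C]; omega), leadingCoeff_X_add_C,
          one_pow, mul_one]
      rw [← hcomp_deg]; exact h1
    have hQd : ∀ c : F, (C a * P.comp (X + C b) + C c).coeff d = 1 := by
      intro c
      rw [coeff_add, coeff_C, if_neg (by omega), add_zero, coeff_C_mul, hcomp_lead,
        inv_mul_cancel₀ hlead]
    have hQdeg : ∀ c : F, (C a * P.comp (X + C b) + C c).natDegree = d := by
      intro c
      refine le_antisymm ((natDegree_add_le _ _).trans ?_) ?_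
      · simp [natDegree_C_mul ha, hcomp_deg]
      · exact le_natDegree_of_ne_zero (by rw [hQd c]; exact one_ne_zero)
    refine ⟨-(a * P.eval b), ?_, ?_, ?_, ?_, ?_⟩
    · have heq : (fun x => (C a * P.comp (X + C b) + C (-(a * P.eval b))).eval x)
        = (fun y => a * y + -(a * P.eval b)) ∘ (fun x => P.eval x) ∘ (fun x => x + b) := by
        funext x; simp [eval_comp]
      rw [heq]
      exact (((Equiv.addRight (-(a * P.eval b))).bijective.comp
        (Equiv.mulLeft₀ a ha).bijective).comp hPP).comp (Equiv.addRight b).bijective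
    · rw [Monic, leadingCoeff, hQdeg]; exact hQd _
    · exact hQdeg _
    · simp [eval_comp]
    · intro k hk
      rw [coeff_add, coeff_C, if_neg (by omega), add_zero, coeff_C_mul, taylor_apply]
  by_cases hc : P.coeff (d-1) = 0
  · obtain ⟨c, hbij, hmon, hdg, hev, hco⟩ := key 0
    refine ⟨a, 0, c, ha, hbij, hmon, hdg, hev, Or.inl ?_⟩
    rw [hco (d-1) (by omega), taylor_zero, hc, mul_zero]
  · set b : F := P.coeff (d-2) / P.coeff (d-1) with hb
    obtain ⟨c, hbij, hmon, hdg, hev, hco⟩ := key b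
    refine ⟨a, b, c, ha, hbij, hmon, hdg, hev, Or.inr ?_⟩
    rw [hco (d-2) (by omega), taylor_coeff]
    have hdeg2 : (Polynomial.hasseDeriv (d-2) P).natDegree < 3 := by
      have := P.natDegree_hasseDeriv_le (d-2); omega
    rw [eval_eq_sum_range' hdeg2, Finset.sum_range_succ, Finset.sum_range_succ,
      Finset.sum_range_one, hasseDeriv_coeff, hasseDeriv_coeff, hasseDeriv_coeff,
      show 0 + (d-2) = d-2 by omega, show 1 + (d-2) = d-1 by omega,
      show 2 + (d-2) = d by omega, Nat.choose_self]
    have c1 : (d-1).choose (d-2) = d-1 := by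
      have := Nat.choose_symm (show 1 ≤ d-1 by omega)
      rw [show d-1-1 = d-2 by omega, Nat.choose_one_right] at this
      exact this
    have c2 : d.choose (d-2) = d.choose 2 :=
      Nat.choose_symm (show 2 ≤ d by omega)
    rw [c1, c2]
    simp only [Nat.cast_one, hdm1F, hchoose2, one_mul, pow_zero, pow_one, mul_one,
      zero_mul, add_zero]
    rw [hb]
    field_simp
    ring
end

section
/- Let F be a finite field of characteristic 2 with |F| = 2^m for some m > 2, let i ≥ 2, let d be an even natural number with 2^i ≤ d ≤ 2^(i+1) − 3, and let P ∈ F[X] be a permutation polynomial of natural degree d. Then there exist a, b, c ∈ F with a ≠ 0 such that Q = a·P(X + b) + c (i.e., C a * P.comp(X + C b) + C c) is a permutation polynomial which is monic of degree d, satisfies Q(0) = 0, and has either its coefficient of X^(2^i − 1) equal to zero or its coefficient of X^(2^i − 2) equal to zero. -/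
open Polynomial

private lemma testBit_of_odd_choose : ∀ (j n k : ℕ), ¬ 2 ∣ n.choose k →
    k.testBit j = true → n.testBit j = true := by
  haveI : Fact (Nat.Prime 2) := ⟨Nat.prime_two⟩
  intro j
  induction j with
  | zero =>
    intro n k h hk
    have hmod := (Choose.choose_modEq_choose_mod_mul_choose_div_nat (n := n) (k := k) (p := 2))
    rw [Nat.ModEq] at hmod
    by_contra hn
    have hk0 : k % 2 = 1 := Nat.mod_two_eq_one_iff_testBit_zero.mpr hk
    have hn0 : n % 2 = 0 := by
      rcases Nat.mod_two_eq_zero_or_one n with h' | h'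
      · exact h'
      · exact absurd (Nat.mod_two_eq_one_iff_testBit_zero.mp h') hn
    rw [hk0, hn0] at hmod
    simp [Nat.choose] at hmod
    exact h (Nat.dvd_of_mod_eq_zero hmod)
  | succ j ih =>
    intro n k h hk
    have hmod := (Choose.choose_modEq_choose_mod_mul_choose_div_nat (n := n) (k := k) (p := 2))
    rw [Nat.ModEq] at hmod
    have h2 : ¬ 2 ∣ (n / 2).choose (k / 2) := by
      intro hdvd
      apply h
      apply Nat.dvd_of_mod_eq_zero
      rw [hmod, Nat.mul_mod, (Nat.mod_eq_zero_of_dvd hdvd), Nat.mul_zero, Nat.zero_mod]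
    rw [Nat.testBit_add_one] at hk ⊢
    exact ih _ _ h2 hk

private lemma two_dvd_choose (i k n : ℕ) (hk : k < 2 ^ i) (hlt : (k + n) % 2 ^ i < k) :
    2 ∣ (k + n).choose k := by
  by_contra h
  have hle : k ≤ (k + n) % 2 ^ i := by
    have hsub : k &&& ((k + n) % 2 ^ i) = k := by
      apply Nat.eq_of_testBit_eq
      intro j
      rw [Nat.testBit_and, Nat.testBit_mod_two_pow]
      by_cases hkj : k.testBit j
      · have hji : j < i := by
          by_contra hji
          have : k.testBit j = false :=
            Nat.testBit_lt_two_pow (lt_of_lt_of_le hk (Nat.pow_le_pow_right (by norm_num) (by omega)))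
          simp [this] at hkj
        rw [hkj, testBit_of_odd_choose j (k + n) k h hkj]
        simp [hji]
      · simp [Bool.eq_false_iff.mpr hkj]
    calc k = k &&& ((k + n) % 2 ^ i) := hsub.symm
    _ ≤ (k + n) % 2 ^ i := Nat.and_le_right
  omega

private lemma cast_eq_zero_of_two_dvd {F : Type*} [Field F] [CharP F 2] {n : ℕ} (h : 2 ∣ n) :
    (n : F) = 0 := by
  obtain ⟨t, rfl⟩ := h
  push_cast
  rw [CharTwo.two_eq_zero, zero_mul]

private lemma hasse1 {F : Type*} [Field F] [CharP F 2] {i d : ℕ} (hi : 2 ≤ i)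
    (hd1 : 2 ^ i ≤ d) (hd2 : d ≤ 2 ^ (i + 1) - 3)
    (P : Polynomial F) (hdeg : P.natDegree = d) :
    hasseDeriv (2 ^ i - 1) P = C (P.coeff (2 ^ i - 1)) := by
  have h2i : 4 ≤ 2 ^ i := by calc (4:ℕ) = 2^2 := rfl
                                 _ ≤ 2^i := Nat.pow_le_pow_right (by norm_num) hi
  have h2i' : 2 ^ (i+1) = 2 * 2 ^ i := by rw [pow_succ]; ring
  ext n
  rw [hasseDeriv_coeff, coeff_C]
  rcases Nat.eq_zero_or_pos n with rfl | hn
  · simp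
  · rw [if_neg (by omega)]
    by_cases hbig : d < n + (2 ^ i - 1)
    · rw [coeff_eq_zero_of_natDegree_lt (by omega), mul_zero]
    · push_neg at hbig
      have hdvd : 2 ∣ (n + (2 ^ i - 1)).choose (2 ^ i - 1) := by
        rw [add_comm]
        exact two_dvd_choose i (2 ^ i - 1) n (by omega)
          (by rw [show 2 ^ i - 1 + n = 2 ^ i + (n - 1) by omega, Nat.add_mod_left,
                Nat.mod_eq_of_lt (by omega)]; omega)
      rw [cast_eq_zero_of_two_dvd hdvd, zero_mul]

private lemma hasse0 {F : Type*} [Field F] [CharP F 2] {i d : ℕ} (hi : 2 ≤ i)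
    (hd1 : 2 ^ i ≤ d) (hd2 : d ≤ 2 ^ (i + 1) - 3)
    (P : Polynomial F) (hdeg : P.natDegree = d) :
    hasseDeriv (2 ^ i - 2) P = C (P.coeff (2 ^ i - 2)) + C (P.coeff (2 ^ i - 1)) * X := by
  have h2i : 4 ≤ 2 ^ i := by calc (4:ℕ) = 2^2 := rfl
                                 _ ≤ 2^i := Nat.pow_le_pow_right (by norm_num) hi
  have h2i' : 2 ^ (i+1) = 2 * 2 ^ i := by rw [pow_succ]; ring
  ext n
  rw [hasseDeriv_coeff, coeff_add, coeff_C, coeff_C_mul, coeff_X]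
  match n with
  | 0 => simp
  | 1 =>
    rw [if_neg (by omega), if_pos rfl, mul_one, zero_add]
    have hpow : 2 ^ i = 2 * 2 ^ (i - 1) := by
      rw [← pow_succ']; congr 1; omega
    have hch : (1 + (2 ^ i - 2)).choose (2 ^ i - 2) = 2 * (2 ^ (i - 1) - 1) + 1 := by
      rw [show 1 + (2 ^ i - 2) = (2 ^ i - 2) + 1 by omega, Nat.choose_succ_self_right]
      omega
    rw [show 1 + (2 ^ i - 2) = 2 ^ i - 1 by omega] at hch ⊢
    rw [hch]
    push_cast
    rw [CharTwo.two_eq_zero, zero_mul, zero_add, one_mul]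
  | (n+2) =>
    rw [if_neg (by omega), if_neg (by omega), mul_zero, add_zero]
    by_cases hbig : d < (n + 2) + (2 ^ i - 2)
    · rw [coeff_eq_zero_of_natDegree_lt (by omega), mul_zero]
    · push_neg at hbig
      have hdvd : 2 ∣ ((n + 2) + (2 ^ i - 2)).choose (2 ^ i - 2) := by
        rw [add_comm]
        exact two_dvd_choose i (2 ^ i - 2) (n + 2) (by omega)
          (by rw [show 2 ^ i - 2 + (n + 2) = 2 ^ i + n by omega, Nat.add_mod_left,
                Nat.mod_eq_of_lt (by omega)]; omega)
      rw [cast_eq_zero_of_two_dvd hdvd, zero_mul]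

/-- b-normalization: over a finite field of characteristic 2 with `2^m` elements (`m > 2`),
any permutation polynomial of even degree `d` with `2^i ≤ d ≤ 2^(i+1) - 3` (`i ≥ 2`) can be
transformed by `P ↦ a·P(X + b) + c` (`a ≠ 0`) into a permutation polynomial `Q` that is monic
of degree `d`, satisfies `Q(0) = 0`, and whose coefficient of `X^(2^i - 1)` or of `X^(2^i - 2)`
is zero. -/
theorem b_normalization (F : Type*) [Field F] [Fintype F] (m : ℕ) (hm : 2 < m)
    [CharP F 2] (hcard : Fintype.card F = 2 ^ m)
    (i : ℕ) (hi : 2 ≤ i) (d : ℕ) (hdeven : Even d) (hd1 : 2 ^ i ≤ d) (hd2 : d ≤ 2 ^ (i + 1) - 3)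
    (P : Polynomial F) (hdeg : P.natDegree = d)
    (hPP : Function.Bijective fun x => P.eval x) :
    ∃ a b c : F, a ≠ 0 ∧
      (Function.Bijective fun x =>
          (C a * P.comp (X + C b) + C c).eval x) ∧
      (C a * P.comp (X + C b) + C c).Monic ∧
      (C a * P.comp (X + C b) + C c).natDegree = d ∧
      (C a * P.comp (X + C b) + C c).eval 0 = 0 ∧
      ((C a * P.comp (X + C b) + C c).coeff (2 ^ i - 1) = 0 ∨
        (C a * P.comp (X + C b) + C c).coeff (2 ^ i - 2) = 0) := by
  have h2i : 4 ≤ 2 ^ i := by calc (4:ℕ) = 2^2 := rfl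
                                 _ ≤ 2^i := Nat.pow_le_pow_right (by norm_num) hi
  have hd0 : 0 < d := by omega
  have hP0 : P ≠ 0 := fun h => by rw [h, natDegree_zero] at hdeg; omega
  set u := P.leadingCoeff with hu_def
  have hu : u ≠ 0 := leadingCoeff_ne_zero.mpr hP0
  set a := u⁻¹ with ha_def
  have ha : a ≠ 0 := inv_ne_zero hu
  have key : ∀ b : F,
      Function.Bijective (fun x => (C a * P.comp (X + C b) + C (a * P.eval b)).eval x) ∧
      (C a * P.comp (X + C b) + C (a * P.eval b)).Monic ∧
      (C a * P.comp (X + C b) + C (a * P.eval b)).natDegree = d ∧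
      (C a * P.comp (X + C b) + C (a * P.eval b)).eval 0 = 0 ∧
      (C a * P.comp (X + C b) + C (a * P.eval b)).coeff (2 ^ i - 1)
        = a * P.coeff (2 ^ i - 1) ∧
      (C a * P.comp (X + C b) + C (a * P.eval b)).coeff (2 ^ i - 2)
        = a * (P.coeff (2 ^ i - 2) + P.coeff (2 ^ i - 1) * b) := by
    intro b
    set R := P.comp (X + C b) with hR_def
    have hXb : (X + C b : Polynomial F).natDegree = 1 := natDegree_X_add_C b
    have hRdeg : R.natDegree = d := by
      rw [hR_def, natDegree_comp, hXb, hdeg, mul_one]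
    have hRlc : R.leadingCoeff = u := by
      rw [hR_def, leadingCoeff_comp (by rw [hXb]; norm_num)]
      rw [(monic_X_add_C b).leadingCoeff, one_pow, mul_one, hu_def]
    have hMonicCaR : (C a * R).Monic := by
      rw [Monic, leadingCoeff_mul, leadingCoeff_C, hRlc]
      exact inv_mul_cancel₀ hu
    have hCaRdeg : (C a * R).natDegree = d := by
      rw [natDegree_mul (by simpa using ha) (fun h => by
        rw [h, natDegree_zero] at hRdeg; omega), natDegree_C, hRdeg, zero_add]
    have hQM : (C a * R + C (a * P.eval b)).Monic := by
      apply hMonicCaR.add_of_left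
      apply lt_of_le_of_lt (degree_C_le)
      rw [← natDegree_pos_iff_degree_pos, hCaRdeg]
      omega
    have hQdeg : (C a * R + C (a * P.eval b)).natDegree = d := by
      rw [natDegree_add_C, hCaRdeg]
    have hQ0 : (C a * R + C (a * P.eval b)).eval 0 = 0 := by
      simp only [eval_add, eval_mul, eval_C, hR_def, eval_comp, eval_add, eval_X, eval_C,
        zero_add]
      exact CharTwo.add_self_eq_zero _
    have hbij : Function.Bijective (fun x => (C a * R + C (a * P.eval b)).eval x) := by
      have : (fun x => (C a * R + C (a * P.eval b)).eval x)
          = (fun y => a * y + a * P.eval b) ∘ (fun x => P.eval x) ∘ (fun x => x + b) := by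
        funext x
        simp [hR_def, eval_comp]
      rw [this]
      exact ((Equiv.addRight (a * P.eval b)).bijective.comp
        (Equiv.mulLeft₀ a ha).bijective).comp (hPP.comp (Equiv.addRight b).bijective)
    have hc1 : (C a * R + C (a * P.eval b)).coeff (2 ^ i - 1) = a * P.coeff (2 ^ i - 1) := by
      rw [coeff_add, coeff_C, if_neg (by omega), add_zero, coeff_C_mul, hR_def,
        ← taylor_apply, taylor_coeff, hasse1 hi hd1 hd2 P hdeg, eval_C]
    have hc0 : (C a * R + C (a * P.eval b)).coeff (2 ^ i - 2)
        = a * (P.coeff (2 ^ i - 2) + P.coeff (2 ^ i - 1) * b) := by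
      rw [coeff_add, coeff_C, if_neg (by omega), add_zero, coeff_C_mul, hR_def,
        ← taylor_apply, taylor_coeff, hasse0 hi hd1 hd2 P hdeg]
      simp
    exact ⟨hbij, hQM, hQdeg, hQ0, hc1, hc0⟩
  by_cases hz : P.coeff (2 ^ i - 1) = 0
  · obtain ⟨h1, h2, h3, h4, h5, _⟩ := key 0
    exact ⟨a, 0, a * P.eval 0, ha, h1, h2, h3, h4, Or.inl (by rw [h5, hz, mul_zero])⟩
  · set b := P.coeff (2 ^ i - 2) * (P.coeff (2 ^ i - 1))⁻¹ with hb_def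
    obtain ⟨h1, h2, h3, h4, _, h6⟩ := key b
    refine ⟨a, b, a * P.eval b, ha, h1, h2, h3, h4, Or.inr ?_⟩
    rw [h6, hb_def, ← mul_assoc, mul_comm (P.coeff (2 ^ i - 1)), mul_assoc,
      mul_inv_cancel₀ hz, mul_one, CharTwo.add_self_eq_zero, mul_zero]
end

section
/- Let F be a finite field of cardinality q and let t ∈ F be a primitive element (every nonzero element of F is a power of t). Let P ∈ F[X] be a permutation polynomial that is monic of natural degree d, satisfies P(0) = 0, and whose coefficient of X^e is zero for some index e < d. Let k be a natural number with 1 ≤ k ≤ d − 1, d − k ≠ e, and gcd(k, q − 1) = 1. Then there exists j : ℕ such that the polynomial Q := C (t^(d·j)) * P.comp(C (t⁻¹)^j * X) is a permutation polynomial that is monic of natural degree d, satisfies Q(0) = 0, has its coefficient of X^e equal to zero, and has its coefficient of X^(d−k) lying in {0, 1}. -/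
open Polynomial

lemma coeff_comp_C_mul_X {F : Type*} [CommSemiring F] (P : Polynomial F) (c : F) (n : ℕ) :
    (P.comp (C c * X)).coeff n = P.coeff n * c ^ n := by
  rw [comp, eval₂_eq_sum, Polynomial.sum]
  simp only [mul_pow, ← C_pow, finset_sum_coeff, coeff_C_mul, coeff_X_pow, mul_ite, mul_one,
    mul_zero]
  rw [Finset.sum_eq_single n (fun b _ hb => by simp [Ne.symm hb]) (fun h => by
    simp [Polynomial.notMem_support_iff.mp h])]
  simp [mul_comm]

/-- If `k` with `1 ≤ k ≤ d - 1`, `d - k ≠ e`, is relatively prime to `q - 1`, then some iterate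
of the F-map transforms a normalized permutation polynomial `P` (monic, `P(0) = 0`, coefficient
of `X^e` zero) into a normalized permutation polynomial whose coefficient of `X^(d-k)` lies
in `{0, 1}`. -/
theorem Fmap_fix_coeff_coprime (F : Type*) [Field F] [Fintype F] (q : ℕ)
    (hq : Fintype.card F = q) (t : F)
    (hprim : ∀ x : F, x ≠ 0 → ∃ n : ℕ, x = t ^ n)
    (P : Polynomial F) (d e : ℕ) (hdeg : P.natDegree = d)
    (hPP : Function.Bijective fun x => P.eval x)
    (hmonic : P.Monic) (h0 : P.eval 0 = 0) (he : e < d) (hce : P.coeff e = 0)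
    (k : ℕ) (hk1 : 1 ≤ k) (hk2 : k ≤ d - 1) (hke : d - k ≠ e)
    (hgcd : Nat.gcd k (q - 1) = 1) :
    ∃ j : ℕ,
      (Function.Bijective fun x =>
          (C (t ^ (d * j)) * P.comp (C t⁻¹ ^ j * X)).eval x) ∧
      (C (t ^ (d * j)) * P.comp (C t⁻¹ ^ j * X)).Monic ∧
      (C (t ^ (d * j)) * P.comp (C t⁻¹ ^ j * X)).natDegree = d ∧
      (C (t ^ (d * j)) * P.comp (C t⁻¹ ^ j * X)).eval 0 = 0 ∧
      (C (t ^ (d * j)) * P.comp (C t⁻¹ ^ j * X)).coeff e = 0 ∧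
      ((C (t ^ (d * j)) * P.comp (C t⁻¹ ^ j * X)).coeff (d - k) = 0 ∨
        (C (t ^ (d * j)) * P.comp (C t⁻¹ ^ j * X)).coeff (d - k) = 1) := by
  have hq2 : 2 ≤ q := hq ▸ Fintype.one_lt_card
  have hkd : k ≤ d := by omega
  by_cases ha : P.coeff (d - k) = 0 ∨ P.coeff (d - k) = 1
  · refine ⟨0, ?_⟩
    simp only [Nat.mul_zero, pow_zero, C_1, one_mul, comp_X]
    exact ⟨hPP, hmonic, hdeg, h0, hce, ha⟩
  · push_neg at ha
    obtain ⟨ha0, ha1⟩ := ha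
    set a := P.coeff (d - k) with hadef
    obtain ⟨m, hm⟩ := hprim a⁻¹ (inv_ne_zero ha0)
    have ht : t ≠ 0 := by
      rintro rfl
      rcases Nat.eq_zero_or_pos m with rfl | hm0
      · rw [pow_zero] at hm
        exact ha1 (by rw [← inv_inv a, hm, inv_one])
      · rw [zero_pow (by omega)] at hm
        exact inv_ne_zero ha0 hm
    have htq : t ^ (q - 1) = 1 := by
      have := FiniteField.pow_card_sub_one_eq_one t ht
      rwa [hq] at this
    haveI : NeZero (q - 1) := ⟨by omega⟩
    set u : (ZMod (q - 1))ˣ := ZMod.unitOfCoprime k hgcd with hu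
    set j : ℕ := (((u⁻¹ : (ZMod (q - 1))ˣ) : ZMod (q - 1)) * (m : ZMod (q - 1))).val with hj
    have hjk : j * k ≡ m [MOD q - 1] := by
      have hcast : ((j * k : ℕ) : ZMod (q - 1)) = (m : ZMod (q - 1)) := by
        push_cast
        rw [hj, ZMod.natCast_val, ZMod.cast_id]
        have hk' : ((k : ℕ) : ZMod (q - 1)) = (u : ZMod (q - 1)) :=
          (ZMod.coe_unitOfCoprime k hgcd).symm
        rw [hk', mul_comm ((u⁻¹ : (ZMod (q - 1))ˣ) : ZMod (q - 1)) _, mul_assoc,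
          ← Units.val_mul, inv_mul_cancel, Units.val_one, mul_one]
      exact (ZMod.natCast_eq_natCast_iff _ _ _).mp hcast
    have hper : ∀ b : ℕ, t ^ b = t ^ (b % (q - 1)) := by
      intro b
      conv_lhs => rw [← Nat.mod_add_div b (q - 1)]
      rw [pow_add, pow_mul, htq, one_pow, mul_one]
    have hpow : t ^ (j * k) = t ^ m := by
      rw [hper (j * k), hper m, hjk]
    have hcoeff : ∀ i, (C (t ^ (d * j)) * P.comp (C t⁻¹ ^ j * X)).coeff i =
        P.coeff i * (t ^ (d * j) * t⁻¹ ^ (j * i)) := by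
      intro i
      rw [← C_pow, coeff_C_mul, coeff_comp_C_mul_X, ← pow_mul]
      ring
    have key : ∀ i ≤ d, t ^ (d * j) * t⁻¹ ^ (j * i) = t ^ (j * (d - i)) := by
      intro i hi
      have hdj : d * j = j * (d - i) + j * i := by
        rw [← Nat.mul_add, Nat.sub_add_cancel hi, Nat.mul_comm]
      rw [hdj, pow_add, inv_pow, mul_assoc, mul_inv_cancel₀ (pow_ne_zero _ ht), mul_one]
    have hcd : (C (t ^ (d * j)) * P.comp (C t⁻¹ ^ j * X)).coeff d = 1 := by
      rw [hcoeff d, key d le_rfl, Nat.sub_self, Nat.mul_zero, pow_zero, mul_one]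
      have := hmonic.coeff_natDegree
      rwa [hdeg] at this
    have hnd : (C (t ^ (d * j)) * P.comp (C t⁻¹ ^ j * X)).natDegree = d := by
      rw [natDegree_C_mul (pow_ne_zero _ ht), natDegree_comp, ← C_pow,
        natDegree_C_mul (pow_ne_zero _ (inv_ne_zero ht)), natDegree_X, hdeg, mul_one]
    refine ⟨j, ?_, ?_, hnd, ?_, ?_, ?_⟩
    · simp only [eval_mul, eval_C, eval_comp, eval_pow, eval_X]
      exact (mulLeft_bijective₀ _ (pow_ne_zero _ ht)).comp
        (hPP.comp (mulLeft_bijective₀ _ (pow_ne_zero _ (inv_ne_zero ht))))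
    · rw [Monic, leadingCoeff, hnd]
      exact hcd
    · simp [eval_comp, h0]
    · rw [hcoeff e, hce, zero_mul]
    · right
      rw [hcoeff (d - k), key (d - k) (Nat.sub_le _ _), Nat.sub_sub_self hkd, hpow, ← hadef,
        ← hm, mul_inv_cancel₀ ha0]
end

section
/- Let F be a finite field of cardinality q and let t ∈ F be a primitive element (every nonzero element of F is a power of t). Let P ∈ F[X] be a permutation polynomial that is monic of natural degree d ≥ 2, satisfies P(0) = 0, and whose coefficient of X^e is zero for some index e < d. Then: (i) if e = d − 1, there exists j : ℕ such that Q := C (t^(d·j)) * P.comp(C (t⁻¹)^j * X) is a permutation polynomial, monic of natural degree d, with Q(0) = 0, coefficient of X^(d−1) equal to zero, and coefficient of X^(d−2) lying in {0, 1, t}; and (ii) if e ≠ d − 1, there exists j : ℕ such that Q := C (t^(d·j)) * P.comp(C (t⁻¹)^j * X) is a permutation polynomial, monic of natural degree d, with Q(0) = 0, coefficient of X^e equal to zero, and coefficient of X^(d−1) lying in {0, 1}. -/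
open Polynomial

lemma aux_coeff_comp {F : Type*} [CommSemiring F] (P : Polynomial F) (a : F) (k : ℕ) :
    (P.comp (C a * X)).coeff k = P.coeff k * a ^ k := by
  conv_lhs => rw [Polynomial.comp, Polynomial.eval₂_eq_sum, Polynomial.sum]
  rw [finset_sum_coeff]
  have : ∀ i ∈ P.support, (C (P.coeff i) * (C a * X) ^ i).coeff k
      = if i = k then P.coeff i * a ^ i else 0 := by
    intro i _
    rw [mul_pow, ← C_pow, ← mul_assoc, ← C_mul, coeff_C_mul, coeff_X_pow]
    rcases eq_or_ne i k with h | h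
    · simp [h]
    · simp [h, Ne.symm h]
  rw [Finset.sum_congr rfl this, Finset.sum_ite_eq' P.support k
    (fun i => P.coeff i * a ^ i)]
  by_cases h : k ∈ P.support
  · simp [h]
  · simp [h, Polynomial.notMem_support_iff.mp h]

lemma aux_Fmap_props {F : Type*} [Field F] (t : F) (ht : t ≠ 0)
    (P : Polynomial F) (d : ℕ) (hd : 0 < d) (hdeg : P.natDegree = d)
    (hmonic : P.Monic) (hPP : Function.Bijective fun x => P.eval x)
    (h0 : P.eval 0 = 0) (j : ℕ) :
    (Function.Bijective fun x => (C (t ^ (d * j)) * P.comp (C t⁻¹ ^ j * X)).eval x) ∧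
    (C (t ^ (d * j)) * P.comp (C t⁻¹ ^ j * X)).Monic ∧
    (C (t ^ (d * j)) * P.comp (C t⁻¹ ^ j * X)).natDegree = d ∧
    (C (t ^ (d * j)) * P.comp (C t⁻¹ ^ j * X)).eval 0 = 0 ∧
    ∀ k, k ≤ d → (C (t ^ (d * j)) * P.comp (C t⁻¹ ^ j * X)).coeff k
      = P.coeff k * t ^ (j * (d - k)) := by
  have htj : t ^ (d * j) ≠ 0 := pow_ne_zero _ ht
  have hu : t⁻¹ ^ j ≠ 0 := pow_ne_zero _ (inv_ne_zero ht)
  have hcoeff : ∀ k, k ≤ d → (C (t ^ (d * j)) * P.comp (C t⁻¹ ^ j * X)).coeff k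
      = P.coeff k * t ^ (j * (d - k)) := by
    intro k hk
    rw [← C_pow, coeff_C_mul, aux_coeff_comp, ← pow_mul, inv_pow]
    have h1 : d * j = j * (d - k) + j * k := by
      rw [← Nat.mul_add, Nat.sub_add_cancel hk, Nat.mul_comm]
    rw [h1, pow_add]
    have h2 : t ^ (j * k) ≠ 0 := pow_ne_zero _ ht
    field_simp
  have hnat : (C (t ^ (d * j)) * P.comp (C t⁻¹ ^ j * X)).natDegree = d := by
    rw [← C_pow, natDegree_C_mul htj, natDegree_comp, natDegree_C_mul_X _ hu,
      hdeg, mul_one]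
  have hmon : (C (t ^ (d * j)) * P.comp (C t⁻¹ ^ j * X)).Monic := by
    rw [Monic, leadingCoeff, hnat, hcoeff d le_rfl, Nat.sub_self, Nat.mul_zero,
      pow_zero, mul_one, ← hdeg]
    exact hmonic
  refine ⟨?_, hmon, hnat, ?_, hcoeff⟩
  · have hfun : (fun x => (C (t ^ (d * j)) * P.comp (C t⁻¹ ^ j * X)).eval x)
        = (fun y => t ^ (d * j) * y) ∘ (fun y => P.eval y) ∘ (fun x => t⁻¹ ^ j * x) := by
      funext x
      simp [eval_comp]
    rw [hfun]
    exact ((Equiv.mulLeft₀ _ htj).bijective.comp hPP).comp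
      (Equiv.mulLeft₀ _ hu).bijective
  · simp [eval_comp, h0]

/-- Every normalized permutation polynomial can be transformed by some iterate of the F-map
so that, in addition, the coefficient of `X^(d-2)` lies in `{0, 1, t}` (when the fixed position
is `e = d - 1`), or the coefficient of `X^(d-1)` lies in `{0, 1}` (when `e ≠ d - 1`). -/
theorem Fmap_fix_fourth_coeff (F : Type*) [Field F] [Fintype F] (q : ℕ)
    (hq : Fintype.card F = q) (t : F)
    (hprim : ∀ x : F, x ≠ 0 → ∃ n : ℕ, x = t ^ n)
    (P : Polynomial F) (d e : ℕ) (hdeg : P.natDegree = d) (hd : 2 ≤ d)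
    (hPP : Function.Bijective fun x => P.eval x)
    (hmonic : P.Monic) (h0 : P.eval 0 = 0) (he : e < d) (hce : P.coeff e = 0) :
    (e = d - 1 →
      ∃ j : ℕ,
        (Function.Bijective fun x =>
            (C (t ^ (d * j)) * P.comp (C t⁻¹ ^ j * X)).eval x) ∧
        (C (t ^ (d * j)) * P.comp (C t⁻¹ ^ j * X)).Monic ∧
        (C (t ^ (d * j)) * P.comp (C t⁻¹ ^ j * X)).natDegree = d ∧
        (C (t ^ (d * j)) * P.comp (C t⁻¹ ^ j * X)).eval 0 = 0 ∧
        (C (t ^ (d * j)) * P.comp (C t⁻¹ ^ j * X)).coeff (d - 1) = 0 ∧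
        ((C (t ^ (d * j)) * P.comp (C t⁻¹ ^ j * X)).coeff (d - 2) = 0 ∨
          (C (t ^ (d * j)) * P.comp (C t⁻¹ ^ j * X)).coeff (d - 2) = 1 ∨
          (C (t ^ (d * j)) * P.comp (C t⁻¹ ^ j * X)).coeff (d - 2) = t)) ∧
    (e ≠ d - 1 →
      ∃ j : ℕ,
        (Function.Bijective fun x =>
            (C (t ^ (d * j)) * P.comp (C t⁻¹ ^ j * X)).eval x) ∧
        (C (t ^ (d * j)) * P.comp (C t⁻¹ ^ j * X)).Monic ∧
        (C (t ^ (d * j)) * P.comp (C t⁻¹ ^ j * X)).natDegree = d ∧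
        (C (t ^ (d * j)) * P.comp (C t⁻¹ ^ j * X)).eval 0 = 0 ∧
        (C (t ^ (d * j)) * P.comp (C t⁻¹ ^ j * X)).coeff e = 0 ∧
        ((C (t ^ (d * j)) * P.comp (C t⁻¹ ^ j * X)).coeff (d - 1) = 0 ∨
          (C (t ^ (d * j)) * P.comp (C t⁻¹ ^ j * X)).coeff (d - 1) = 1)) := by
  have hd0 : 0 < d := by omega
  have hQ0 : C (t ^ (d * 0)) * P.comp (C t⁻¹ ^ 0 * X) = P := by simp
  have hq2 : 2 ≤ q := by rw [← hq]; exact Fintype.one_lt_card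
  constructor
  · -- case e = d - 1
    intro he1
    have hce' : P.coeff (d - 1) = 0 := he1 ▸ hce
    by_cases ha : P.coeff (d - 2) = 0
    · exact ⟨0, by rw [hQ0]; exact ⟨hPP, hmonic, hdeg, h0, hce', Or.inl ha⟩⟩
    · obtain ⟨n, hn⟩ := hprim _ ha
      by_cases ht : t = 0
      · have hn0 : n = 0 := by
          by_contra hne
          exact ha (by rw [hn, ht, zero_pow hne])
        refine ⟨0, ?_⟩
        rw [hQ0]
        exact ⟨hPP, hmonic, hdeg, h0, hce',
          Or.inr (Or.inl (by rw [hn, hn0, pow_zero]))⟩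
      · have htm : t ^ (q - 1) = 1 := by
          have := FiniteField.pow_card_sub_one_eq_one t ht
          rwa [hq] at this
        refine ⟨(n / 2) * (q - 2), ?_⟩
        obtain ⟨hbij, hmon, hnat, hev, hcoeff⟩ :=
          aux_Fmap_props t ht P d hd0 hdeg hmonic hPP h0 ((n / 2) * (q - 2))
        refine ⟨hbij, hmon, hnat, hev, ?_, ?_⟩
        · rw [hcoeff (d - 1) (by omega), hce', zero_mul]
        · rw [hcoeff (d - 2) (by omega), hn, ← pow_add]
          have hdd : d - (d - 2) = 2 := by omega
          have h2 : n = 2 * (n / 2) + n % 2 := (Nat.div_add_mod n 2).symm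
          have h3 : q - 1 = (q - 2) + 1 := by omega
          have hexp : n + (n / 2) * (q - 2) * (d - (d - 2))
              = n % 2 + (q - 1) * (2 * (n / 2)) := by
            rw [hdd]
            calc n + (n / 2) * (q - 2) * 2
                = 2 * (n / 2) + n % 2 + (n / 2) * (q - 2) * 2 := by rw [← h2]
              _ = n % 2 + ((q - 2) + 1) * (2 * (n / 2)) := by ring
              _ = n % 2 + (q - 1) * (2 * (n / 2)) := by rw [← h3]
          rw [hexp, pow_add, pow_mul, htm, one_pow, mul_one]
          rcases Nat.mod_two_eq_zero_or_one n with h | h <;> rw [h]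
          · exact Or.inr (Or.inl (pow_zero t))
          · exact Or.inr (Or.inr (pow_one t))
  · -- case e ≠ d - 1
    intro he1
    by_cases hb : P.coeff (d - 1) = 0
    · exact ⟨0, by rw [hQ0]; exact ⟨hPP, hmonic, hdeg, h0, hce, Or.inl hb⟩⟩
    · obtain ⟨n, hn⟩ := hprim _ hb
      by_cases ht : t = 0
      · have hn0 : n = 0 := by
          by_contra hne
          exact hb (by rw [hn, ht, zero_pow hne])
        refine ⟨0, ?_⟩
        rw [hQ0]
        exact ⟨hPP, hmonic, hdeg, h0, hce,
          Or.inr (by rw [hn, hn0, pow_zero])⟩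
      · have htm : t ^ (q - 1) = 1 := by
          have := FiniteField.pow_card_sub_one_eq_one t ht
          rwa [hq] at this
        refine ⟨n * (q - 2), ?_⟩
        obtain ⟨hbij, hmon, hnat, hev, hcoeff⟩ :=
          aux_Fmap_props t ht P d hd0 hdeg hmonic hPP h0 (n * (q - 2))
        refine ⟨hbij, hmon, hnat, hev, ?_, ?_⟩
        · rw [hcoeff e (le_of_lt he), hce, zero_mul]
        · rw [hcoeff (d - 1) (by omega), hn, ← pow_add]
          have h3 : q - 1 = (q - 2) + 1 := by omega
          have hdd : d - (d - 1) = 1 := by omega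
          have hexp : n + n * (q - 2) * (d - (d - 1)) = (q - 1) * n := by
            rw [hdd]
            calc n + n * (q - 2) * 1 = ((q - 2) + 1) * n := by ring
              _ = (q - 1) * n := by rw [← h3]
          rw [hexp, pow_mul, htm, one_pow]
          exact Or.inr rfl
end
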